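/- For every integer q ≥ 1, one has scal_g(t_q)/6 = q(q+2)/3; that is, at the instant t_q the quantity scal_g(t_q)/(m−1) (with m = 7) equals the q-th positive eigenvalue β_q = q(q+2)/3 of the Laplacian of the base CP² = SU(3)/U(2) with the metric induced by the negative of the Cartan–Killing form of su(3). -/

import Mathlib

/-- At each degeneracy instant `t_q`, one has `scal_g(t_q)/6 = q(q+2)/3`. -/
theorem aloff_wallach_scal_at_degeneracy (k l : ℤ) (hkl : k > l) (hl : 0 < l)
    (hgcd : Int.gcd k l = 1)
    (γ : ℝ) (hγ : γ = (k : ℝ) ^ 2 + (k : ℝ) * (l : ℝ) + (l : ℝ) ^ 2)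
    (scal_g : ℝ → ℝ)
    (hscal : ∀ t > 0, scal_g t =
      -((10 * γ - 3 * (k : ℝ) ^ 2) * t ^ 2) / (24 * γ) +
        (16 * γ - 3 * (k : ℝ) ^ 2) / (24 * γ * t ^ 2) + 2)
    (tseq : ℕ → ℝ)
    (htseq : ∀ q : ℕ, 1 ≤ q → tseq q =
      (1 / Real.sqrt (2 * (10 * γ - 3 * (k : ℝ) ^ 2))) *
        Real.sqrt (48 * γ * (1 - 2 * (q : ℝ) - (q : ℝ) ^ 2) +
          Real.sqrt ((48 * γ) ^ 2 * (1 - 2 * (q : ℝ) - (q : ℝ) ^ 2) ^ 2 -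
            4 * (3 * (k : ℝ) ^ 2 - 10 * γ) * (16 * γ - 3 * (k : ℝ) ^ 2)))) :
    ∀ q : ℕ, 1 ≤ q → scal_g (tseq q) / 6 = (q : ℝ) * ((q : ℝ) + 2) / 3 := by
  intro q hq
  have ht0 := htseq q hq
  have hl1 : (1:ℝ) ≤ (l:ℝ) := by exact_mod_cast hl
  have hkl' : (l:ℝ) + 1 ≤ (k:ℝ) := by exact_mod_cast hkl
  have hq1 : (1:ℝ) ≤ (q:ℝ) := by exact_mod_cast hq
  have hγpos : 0 < γ := by nlinarith
  have hA : 0 < 10*γ - 3*(k:ℝ)^2 := by nlinarith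
  have hB : 0 < 16*γ - 3*(k:ℝ)^2 := by nlinarith
  set A := 10*γ - 3*(k:ℝ)^2 with hAdef
  set B := 16*γ - 3*(k:ℝ)^2 with hBdef
  set c := 48*γ*(1 - 2*(q:ℝ) - (q:ℝ)^2) with hcdef
  have hDrw : (48*γ)^2*(1 - 2*(q:ℝ) - (q:ℝ)^2)^2 - 4*(3*(k:ℝ)^2 - 10*γ)*B
      = c^2 + 4*(A*B) := by rw [hcdef, hAdef, hBdef]; ring
  rw [hDrw] at ht0
  set s := Real.sqrt (c^2 + 4*(A*B)) with hsdef
  have hs0 : 0 ≤ s := Real.sqrt_nonneg _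
  have hs2 : s^2 = c^2 + 4*(A*B) := Real.sq_sqrt (by positivity)
  have hcneg : c < 0 := by rw [hcdef]; nlinarith
  have hsgt : -c < s := by nlinarith [mul_pos hA hB]
  have hX : 0 < c + s := by linarith
  have h2A : 0 < 2*A := by linarith
  have htpos : 0 < tseq q := by
    rw [ht0]
    exact mul_pos (div_pos one_pos (Real.sqrt_pos.mpr h2A)) (Real.sqrt_pos.mpr hX)
  have ht2 : (tseq q)^2 = (c + s)/(2*A) := by
    rw [ht0, mul_pow, div_pow, one_pow, Real.sq_sqrt h2A.le, Real.sq_sqrt hX.le]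
    ring
  have key : (c + s)^2 = 2*c*(c + s) + 4*(A*B) := by linear_combination hs2
  rw [hscal _ htpos, ht2]
  have hcs : c + s ≠ 0 := ne_of_gt hX
  have hAne : A ≠ 0 := by positivity
  have hγne : γ ≠ 0 := ne_of_gt hγpos
  field_simp
  linear_combination (-3)*key + (-6*(c+s))*hcdef
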